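/- Let n ≥ 1, d ≥ 2, R ≥ 1, let c_1 ∈ ℝ^n and c_i ∈ ℝ^{n^i} for i = 2,…,d with krank(c_i) ≤ R for all i = 2,…,d (with the convention c_i = 0 for i > d). For k > 2 define: if k = 2κ+1 is odd, C̃_k := 2 Σ_{i=1}^{κ} c_i ⊗ c_{k−i}; if k = 2κ is even, C̃_k := c_κ ⊗ c_κ + 2 Σ_{i=1}^{κ−1} c_i ⊗ c_{k−i}; and C̃_2 := c_1 ⊗ c_1. Then krank(C̃_2) ≤ 1, and for every k > 2 (with κ = ⌊k/2⌋) one has krank(C̃_k) ≤ (κ−1) R² + R. -/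

import Mathlib

open Matrix MeasureTheory
open scoped BigOperators Nat RealInnerProductSpace

noncomputable section

namespace LPO

/-- Multi-index representation of an index of `ℝ^{n^k}`. -/
def mi {n k : ℕ} (m : Fin (n ^ k)) : Fin k → Fin n :=
  finFunctionFinEquiv.symm m

/-- The Kronecker product `u₁ ⊗ ⋯ ⊗ u_k ∈ ℝ^{n^k}` of `k` vectors in `ℝ^n`. -/
def vkronFam (n k : ℕ) (u : Fin k → Fin n → ℝ) : Fin (n ^ k) → ℝ :=
  fun m => ∏ i, u i (mi m i)

/-- The `k`-fold Kronecker power `x ⊗ ⋯ ⊗ x ∈ ℝ^{n^k}` of `x ∈ ℝ^n`. -/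
def kpow {n : ℕ} (x : Fin n → ℝ) (k : ℕ) : Fin (n ^ k) → ℝ :=
  fun m => ∏ i, x (mi m i)

/-- Kronecker product `ℝ^{n^a} × ℝ^{n^b} → ℝ^{n^(a+b)}`. -/
def vkron {n a b : ℕ} (u : Fin (n ^ a) → ℝ) (v : Fin (n ^ b) → ℝ) :
    Fin (n ^ (a + b)) → ℝ :=
  fun m =>
    u (finFunctionFinEquiv fun i => mi m (Fin.castAdd b i)) *
      v (finFunctionFinEquiv fun i => mi m (Fin.natAdd a i))

/-- Cast `ℝ^{n^a} → ℝ^{n^b}` along a proof that `a = b`. -/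
def vcast {n a b : ℕ} (h : a = b) (v : Fin (n ^ a) → ℝ) : Fin (n ^ b) → ℝ :=
  fun m => v (Fin.cast (by rw [h]) m)

/-- Kronecker product of `k` (square, equally sized) matrices. -/
def mkron {n : ℕ} (k : ℕ) (M : Fin k → Matrix (Fin n) (Fin n) ℝ) :
    Matrix (Fin (n ^ k)) (Fin (n ^ k)) ℝ :=
  Matrix.of fun p q => ∏ i, M i (mi p i) (mi q i)

/-- `k`-fold Kronecker power of an `n × r` matrix. -/
def mkronRect {n r : ℕ} (k : ℕ) (Q : Matrix (Fin n) (Fin r) ℝ) :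
    Matrix (Fin (n ^ k)) (Fin (r ^ k)) ℝ :=
  Matrix.of fun p q => ∏ i, Q (mi p i) (mi q i)

/-- `L_k(A) = Σ_{j=1}^k I ⊗ ⋯ ⊗ I ⊗ A ⊗ I ⊗ ⋯ ⊗ I` with `A` in the `j`-th slot. -/
def LkMat {n : ℕ} (A : Matrix (Fin n) (Fin n) ℝ) (k : ℕ) :
    Matrix (Fin (n ^ k)) (Fin (n ^ k)) ℝ :=
  ∑ j : Fin k, mkron k fun i => if i = j then A else 1

/-- All complex eigenvalues of the real matrix `A` have negative real part. -/
def StableMat {n : ℕ} (A : Matrix (Fin n) (Fin n) ℝ) : Prop :=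
  ∀ z : ℂ, (A.map (algebraMap ℝ ℂ)).charpoly.IsRoot z → z.re < 0

/-- The mode-permutation operator `P_τ` on `ℝ^{n^k}`, characterized by
`P_τ (u₁ ⊗ ⋯ ⊗ u_k) = u_{τ(1)} ⊗ ⋯ ⊗ u_{τ(k)}`. -/
def permVec {n k : ℕ} (τ : Equiv.Perm (Fin k)) (w : Fin (n ^ k) → ℝ) :
    Fin (n ^ k) → ℝ :=
  fun m => w (finFunctionFinEquiv (mi m ∘ ⇑τ⁻¹))

/-- `w ∈ ℝ^{n^k}` has Kronecker (CP) rank at most `R`. -/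
def KrankLe {n k : ℕ} (w : Fin (n ^ k) → ℝ) (R : ℕ) : Prop :=
  ∃ u : Fin R → Fin k → Fin n → ℝ, w = ∑ j, vkronFam n k (u j)

/-- The right-hand side `C_k = -Σ_{i=1}^{k-1} c_i ⊗ c_{k-i}` of the linear system for `w_k`. -/
def Cvec {n : ℕ} (c : (i : ℕ) → Fin (n ^ i) → ℝ) (k : ℕ) : Fin (n ^ k) → ℝ :=
  -(∑ i ∈ (Finset.Icc 1 (k - 1)).attach,
      vcast (show i.1 + (k - i.1) = k from by
          have := Finset.mem_Icc.mp i.2; omega)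
        (vkron (c i.1) (c (k - i.1))))

/-- Euclidean norm on `ℝ^N`. -/
def enorm {N : ℕ} (v : Fin N → ℝ) : ℝ := Real.sqrt (v ⬝ᵥ v)

/-- Spectral norm of a complex matrix: the operator norm of the induced map between
Euclidean spaces. -/
def specNorm {m : ℕ} (M : Matrix (Fin m) (Fin m) ℂ) : ℝ :=
  ‖LinearMap.toContinuousLinearMap (Matrix.toEuclideanLin M)‖

/-- Euclidean ball of radius `L` in `ℝ^n`. -/
def eball (n : ℕ) (L : ℝ) : Set (Fin n → ℝ) := {x | x ⬝ᵥ x ≤ L ^ 2}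

/-- Square matricization `ℝ^{n^{2κ}} → ℝ^{n^κ × n^κ}`, characterized by
`(u₁⊗⋯⊗u_κ)ᵀ W (v₁⊗⋯⊗v_κ) = wᵀ (u₁⊗⋯⊗u_κ⊗v₁⊗⋯⊗v_κ)`. -/
def sqMatz {n κ : ℕ} (w : Fin (n ^ (2 * κ)) → ℝ) :
    Matrix (Fin (n ^ κ)) (Fin (n ^ κ)) ℝ :=
  Matrix.of fun p q =>
    w (Fin.cast (show n ^ (κ + κ) = n ^ (2 * κ) from by rw [two_mul])
        (finFunctionFinEquiv (Fin.append (mi p) (mi q))))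

end LPO

namespace LPO

/-- The low-rank right-hand side `C̃_k` (Lemma on minimal Kronecker rank). -/
def Ctil {n : ℕ} (c : (i : ℕ) → Fin (n ^ i) → ℝ) (k : ℕ) : Fin (n ^ k) → ℝ :=
  if hk : k % 2 = 1 then
    (2 : ℝ) • ∑ i ∈ (Finset.Icc 1 (k / 2)).attach,
      vcast (show i.1 + (k - i.1) = k from by
          have := Finset.mem_Icc.mp i.2; omega)
        (vkron (c i.1) (c (k - i.1)))
  else
    vcast (show k / 2 + k / 2 = k from by omega)
        (vkron (c (k / 2)) (c (k / 2)))
      + (2 : ℝ) • ∑ i ∈ (Finset.Icc 1 (k / 2 - 1)).attach,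
          vcast (show i.1 + (k - i.1) = k from by
              have := Finset.mem_Icc.mp i.2; omega)
            (vkron (c i.1) (c (k - i.1)))

/-- Quadrature step size `h_st = π / √ℓ`. -/
def quadStep (ℓ : ℕ) : ℝ := Real.pi / Real.sqrt ℓ

/-- Quadrature node `α_i`. -/
def quadNode (k : ℕ) (lmin : ℝ) (ℓ : ℕ) (i : ℤ) : ℝ :=
  Real.log (Real.exp (i * quadStep ℓ) +
      Real.sqrt (1 + Real.exp (2 * i * quadStep ℓ))) / (k * lmin)

/-- Quadrature weight `ω_i`. -/
def quadWeight (k : ℕ) (lmin : ℝ) (ℓ : ℕ) (i : ℤ) : ℝ :=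
  quadStep ℓ / (Real.sqrt (1 + Real.exp (-2 * i * quadStep ℓ)) * (k * lmin))

/-- The quadrature-based approximation
`x_ℓ = -Σ_{i=-ℓ}^{ℓ} ω_i (exp(α_i A) ⊗ ⋯ ⊗ exp(α_i A)) b`. -/
def quadApprox {n : ℕ} (A : Matrix (Fin n) (Fin n) ℝ) (k : ℕ) (lmin : ℝ) (ℓ : ℕ)
    (b : Fin (n ^ k) → ℝ) : Fin (n ^ k) → ℝ :=
  -(∑ i ∈ Finset.Icc (-(ℓ : ℤ)) (ℓ : ℤ),
      quadWeight k lmin ℓ i •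
        (mkron k (fun _ => NormedSpace.exp (quadNode k lmin ℓ i • A)) *ᵥ b))

end LPO

namespace LPO

section KrankLemmas

variable {n : ℕ}

lemma krank_zero {k R : ℕ} (hk : 1 ≤ k) : KrankLe (0 : Fin (n ^ k) → ℝ) R := by
  refine ⟨fun _ _ _ => 0, ?_⟩
  have hz : vkronFam n k (fun _ _ => (0 : ℝ)) = 0 := by
    funext m
    simp only [vkronFam, Finset.prod_const, Finset.card_univ, Fintype.card_fin, Pi.zero_apply]
    exact zero_pow (by omega)
  simp [hz]

lemma krank_add {k R S : ℕ} {w w' : Fin (n ^ k) → ℝ}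
    (h : KrankLe w R) (h' : KrankLe w' S) : KrankLe (w + w') (R + S) := by
  obtain ⟨u, hu⟩ := h
  obtain ⟨v, hv⟩ := h'
  refine ⟨Fin.append u v, ?_⟩
  rw [hu, hv, Fin.sum_univ_add]
  simp [Fin.append_left, Fin.append_right]

lemma krank_mono {k R S : ℕ} (hk : 1 ≤ k) {w : Fin (n ^ k) → ℝ}
    (h : KrankLe w R) (hRS : R ≤ S) : KrankLe w S := by
  have h2 := krank_add h (krank_zero (R := S - R) hk)
  rwa [add_zero, Nat.add_sub_cancel' hRS] at h2

lemma krank_smul {k R : ℕ} (hk : 1 ≤ k) (a : ℝ) {w : Fin (n ^ k) → ℝ}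
    (h : KrankLe w R) : KrankLe (a • w) R := by
  obtain ⟨u, hu⟩ := h
  refine ⟨fun j i x => (if i = (⟨0, hk⟩ : Fin k) then a else 1) * u j i x, ?_⟩
  rw [hu, Finset.smul_sum]
  refine Finset.sum_congr rfl fun j _ => ?_
  funext m
  simp only [vkronFam, Pi.smul_apply, smul_eq_mul]
  rw [Finset.prod_mul_distrib]
  congr 1
  simp

lemma krank_single (v : Fin (n ^ 1) → ℝ) : KrankLe v 1 := by
  refine ⟨fun _ _ x => v (finFunctionFinEquiv fun _ => x), ?_⟩
  funext m
  rw [Finset.sum_apply, Fin.sum_univ_one]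
  show v m = ∏ i : Fin 1, v (finFunctionFinEquiv fun _ => mi m i)
  rw [Fin.prod_univ_one]
  have h1 : (fun _ : Fin 1 => mi m 0) = mi m := funext fun i => by
    rw [Subsingleton.elim i 0]
  rw [h1]
  exact congrArg v (Equiv.apply_symm_apply _ m).symm

lemma krank_vkron {a b R S : ℕ} {u : Fin (n ^ a) → ℝ} {v : Fin (n ^ b) → ℝ}
    (hu : KrankLe u R) (hv : KrankLe v S) : KrankLe (vkron u v) (R * S) := by
  obtain ⟨f, hf⟩ := hu
  obtain ⟨g, hg⟩ := hv
  refine ⟨fun J => Fin.append (f (finProdFinEquiv.symm J).1) (g (finProdFinEquiv.symm J).2), ?_⟩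
  funext m
  have key : ∀ (j : Fin R) (l : Fin S),
      vkronFam n a (f j) (finFunctionFinEquiv fun i => mi m (Fin.castAdd b i)) *
        vkronFam n b (g l) (finFunctionFinEquiv fun i => mi m (Fin.natAdd a i)) =
      vkronFam n (a + b) (Fin.append (f j) (g l)) m := by
    intro j l
    simp only [vkronFam, mi, Equiv.symm_apply_apply]
    rw [Fin.prod_univ_add]
    congr 1
    · exact Finset.prod_congr rfl fun i _ => by rw [Fin.append_left]
    · exact Finset.prod_congr rfl fun i _ => by rw [Fin.append_right]
  rw [hf, hg]
  show (∑ j, vkronFam n a (f j)) _ * (∑ l, vkronFam n b (g l)) _ = _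
  rw [Finset.sum_apply, Finset.sum_apply, Finset.sum_apply, Finset.sum_mul_sum]
  rw [← Equiv.sum_comp (finProdFinEquiv : Fin R × Fin S ≃ Fin (R * S))
    (fun J => vkronFam n (a + b)
      (Fin.append (f (finProdFinEquiv.symm J).1) (g (finProdFinEquiv.symm J).2)) m)]
  rw [Fintype.sum_prod_type]
  refine Finset.sum_congr rfl fun j _ => Finset.sum_congr rfl fun l _ => ?_
  rw [Equiv.symm_apply_apply]
  exact key j l

lemma krank_vcast {a b R : ℕ} (h : a = b) {w : Fin (n ^ a) → ℝ}
    (hw : KrankLe w R) : KrankLe (vcast h w) R := by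
  subst h
  have heq : vcast (n := n) rfl w = w := by
    funext m
    exact congrArg w (Fin.ext rfl)
  rwa [heq]

lemma krank_sum {k : ℕ} {ι : Type*} (s : Finset ι)
    (f : ι → Fin (n ^ k) → ℝ) (r : ι → ℕ)
    (h : ∀ i ∈ s, KrankLe (f i) (r i)) :
    KrankLe (∑ i ∈ s, f i) (∑ i ∈ s, r i) := by
  classical
  induction s using Finset.cons_induction with
  | empty =>
      simp only [Finset.sum_empty]
      exact ⟨Fin.elim0, by simp⟩
  | cons a s ha ih =>
      rw [Finset.sum_cons, Finset.sum_cons]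
      exact krank_add (h _ (Finset.mem_cons_self _ _))
        (ih fun i hi => h i (Finset.mem_cons_of_mem hi))

end KrankLemmas

/-- If `krank(c_i) ≤ R` for `i = 2,…,d` (and `c_i = 0` for `i > d`),
then the symmetrized right-hand sides `C̃_k` satisfy `krank(C̃_2) ≤ 1` and, for `k > 2`
with `κ = ⌊k/2⌋`, `krank(C̃_k) ≤ (κ-1)R² + R`. -/
theorem krank_Ctil_bound
    {n d R : ℕ} (hn : 1 ≤ n) (hd : 2 ≤ d) (hR : 1 ≤ R)
    (c : (i : ℕ) → Fin (n ^ i) → ℝ) (hc0 : ∀ i, d < i → c i = 0)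
    (hcR : ∀ i, 2 ≤ i → i ≤ d → KrankLe (c i) R) :
    KrankLe (Ctil c 2) 1 ∧
      ∀ k, 2 < k → KrankLe (Ctil c k) ((k / 2 - 1) * R ^ 2 + R) := by
  have hcgen : ∀ i, 2 ≤ i → KrankLe (c i) R := by
    intro i hi
    by_cases hid : i ≤ d
    · exact hcR i hi hid
    · rw [hc0 i (by omega)]
      exact krank_zero (by omega)
  have hterm : ∀ (k i : ℕ), 1 ≤ i → 2 ≤ k - i → ∀ (h : i + (k - i) = k),
      KrankLe (vcast h (vkron (c i) (c (k - i)))) ((if i = 1 then 1 else R) * R) := by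
    intro k i hi1 hi2 h
    refine krank_vcast h (krank_vkron ?_ (hcgen _ hi2))
    by_cases h1 : i = 1
    · subst h1
      rw [if_pos rfl]
      exact krank_single (c 1)
    · rw [if_neg h1]
      exact hcgen i (by omega)
  constructor
  · -- k = 2
    have h2 : Ctil c 2 = vcast (by norm_num) (vkron (c 1) (c 1)) := by
      unfold Ctil
      norm_num
      exact Finset.sum_eq_zero fun i _ => absurd (Finset.mem_Icc.mp i.2) (by omega)
    rw [h2]
    have := krank_vcast (n := n) (by norm_num : 1 + 1 = 2)
      (krank_vkron (krank_single (c 1)) (krank_single (c 1)))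
    simpa using this
  · intro k hk
    set κ := k / 2 with hκ
    have hκ1 : 1 ≤ κ := by omega
    by_cases hpar : k % 2 = 1
    · -- odd case
      unfold Ctil
      rw [dif_pos hpar]
      have harith : ∑ i ∈ (Finset.Icc 1 κ).attach, (if i.1 = 1 then 1 else R) * R
          = (κ - 1) * R ^ 2 + R := by
        rw [Finset.sum_attach (Finset.Icc 1 κ) (fun i => (if i = 1 then 1 else R) * R)]
        rw [show Finset.Icc 1 κ = insert 1 (Finset.Icc 2 κ) from by
          ext x; simp only [Finset.mem_Icc, Finset.mem_insert]; omega]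
        rw [Finset.sum_insert (by simp [Finset.mem_Icc])]
        rw [Finset.sum_congr rfl (fun x hx => by
          rw [if_neg (by have := Finset.mem_Icc.mp hx; omega)])]
        rw [Finset.sum_const, Nat.card_Icc, smul_eq_mul]
        rw [show κ + 1 - 2 = κ - 1 from by omega, if_pos rfl, pow_two]
        ring
      rw [← harith]
      refine krank_smul (by omega) 2 ?_
      exact krank_sum _ _ _ (fun i _ => hterm k i.1
        (by have := Finset.mem_Icc.mp i.2; omega)
        (by have := Finset.mem_Icc.mp i.2; omega) _)
    · -- even case
      have hκ2 : 2 ≤ κ := by omega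
      unfold Ctil
      rw [dif_neg hpar]
      have hhead : KrankLe (vcast (show κ + κ = k from by omega)
          (vkron (c κ) (c κ))) (R * R) :=
        krank_vcast _ (krank_vkron (hcgen κ hκ2) (hcgen κ hκ2))
      have hsum : KrankLe ((2 : ℝ) • ∑ i ∈ (Finset.Icc 1 (κ - 1)).attach,
          vcast (show i.1 + (k - i.1) = k from by
            have := Finset.mem_Icc.mp i.2; omega)
            (vkron (c i.1) (c (k - i.1))))
          (∑ i ∈ (Finset.Icc 1 (κ - 1)).attach, (if i.1 = 1 then 1 else R) * R) := by
        refine krank_smul (by omega) 2 ?_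
        exact krank_sum _ _ _ (fun i _ => hterm k i.1
          (by have := Finset.mem_Icc.mp i.2; omega)
          (by have := Finset.mem_Icc.mp i.2; omega) _)
      have harith : R * R + ∑ i ∈ (Finset.Icc 1 (κ - 1)).attach,
          (if i.1 = 1 then 1 else R) * R = (κ - 1) * R ^ 2 + R := by
        rw [Finset.sum_attach (Finset.Icc 1 (κ - 1)) (fun i => (if i = 1 then 1 else R) * R)]
        rw [show Finset.Icc 1 (κ - 1) = insert 1 (Finset.Icc 2 (κ - 1)) from by
          ext x; simp only [Finset.mem_Icc, Finset.mem_insert]; omega]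
        rw [Finset.sum_insert (by simp [Finset.mem_Icc])]
        rw [Finset.sum_congr rfl (fun x hx => by
          rw [if_neg (by have := Finset.mem_Icc.mp hx; omega)])]
        rw [Finset.sum_const, Nat.card_Icc, smul_eq_mul]
        rw [show κ - 1 + 1 - 2 = κ - 2 from by omega, if_pos rfl, pow_two]
        rw [show κ - 1 = (κ - 2) + 1 from by omega, Nat.succ_mul]
        ring
      rw [← harith]
      exact krank_add hhead hsum

end LPO
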